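/- arXiv:2311.11352 — 2 statements merged into one kernel-verified Lean document; each statement's English description precedes it below -/
import Mathlib

section
/- For every real number x, the series ∑_{n=0}^∞ (B_n / n!) x^n converges and equals exp(e^x − 1), where B_n := e^{-1} ∑_{k=0}^∞ k^n / k! (the n-th Bell number given by Dobinski's formula). -/
open Real

lemma hasSum_exp_real (y : ℝ) :
    HasSum (fun n : ℕ => y ^ n / (Nat.factorial n : ℝ)) (Real.exp y) := by
  rw [Real.exp_eq_exp_ℝ]
  exact NormedSpace.expSeries_div_hasSum_exp y

lemma summable_pow_div_factorial' (n : ℕ) :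
    Summable (fun k : ℕ => (k : ℝ) ^ n / (Nat.factorial k : ℝ)) := by
  refine Summable.of_nonneg_of_le (fun k => by positivity)
    (fun k => ?_) (Real.summable_pow_div_factorial ((2:ℝ) ^ n))
  have hk : (k : ℝ) ≤ (2:ℝ) ^ k := by
    exact_mod_cast (Nat.lt_two_pow_self (n := k)).le
  have : (k : ℝ) ^ n ≤ ((2:ℝ) ^ k) ^ n := pow_le_pow_left₀ (by positivity) hk n
  calc (k : ℝ) ^ n / (Nat.factorial k : ℝ) ≤ ((2:ℝ) ^ k) ^ n / (Nat.factorial k : ℝ) := by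
        gcongr
    _ = ((2:ℝ) ^ n) ^ k / (Nat.factorial k : ℝ) := by rw [← pow_mul, ← pow_mul, Nat.mul_comm]

noncomputable def bellDobinski (n : ℕ) : ℝ :=
  (Real.exp 1)⁻¹ * ∑' k : ℕ, (k : ℝ) ^ n / (Nat.factorial k : ℝ)

set_option maxHeartbeats 1000000 in
/-- For every real `x`, the series `∑_{n=0}^∞ (B_n / n!) x^n` converges and equals
`exp (e^x - 1)`. -/
theorem bell_generating_function (x : ℝ) :
    HasSum (fun n : ℕ => bellDobinski n / (Nat.factorial n : ℝ) * x ^ n)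
      (Real.exp (Real.exp x - 1)) := by
  -- the double series, k first then n
  set f : ℕ × ℕ → ℝ := fun p =>
    ((p.1 : ℝ) * x) ^ p.2 / (Nat.factorial p.2 : ℝ) / (Nat.factorial p.1 : ℝ) with hf
  have hrow : ∀ k : ℕ, HasSum (fun n => f (k, n))
      (Real.exp ((k : ℝ) * x) / (Nat.factorial k : ℝ)) := fun k =>
    (hasSum_exp_real ((k : ℝ) * x)).div_const _
  -- summability of |f|
  have habs : Summable fun p : ℕ × ℕ => |f p| := by
    rw [summable_prod_of_nonneg (fun p => abs_nonneg _)]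
    constructor
    · intro k
      have : (fun n => |f (k, n)|) =
          fun n => ((k : ℝ) * |x|) ^ n / (Nat.factorial n : ℝ) / (Nat.factorial k : ℝ) := by
        funext n
        simp [hf, abs_div, abs_pow, abs_mul, Nat.abs_cast]
      rw [this]
      exact ((hasSum_exp_real ((k : ℝ) * |x|)).div_const _).summable
    · have : ∀ k : ℕ, ∑' n, |f (k, n)|
          = Real.exp ((k : ℝ) * |x|) / (Nat.factorial k : ℝ) := by
        intro k
        have h1 : HasSum (fun n => |f (k, n)|)
            (Real.exp ((k : ℝ) * |x|) / (Nat.factorial k : ℝ)) := by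
          have := (hasSum_exp_real ((k : ℝ) * |x|)).div_const (Nat.factorial k : ℝ)
          convert this using 2 with n
          · rfl
          simp [hf, abs_div, abs_pow, abs_mul, Nat.abs_cast]
        exact h1.tsum_eq
      simp only [this]
      have : (fun k : ℕ => Real.exp ((k : ℝ) * |x|) / (Nat.factorial k : ℝ)) =
          fun k : ℕ => (Real.exp |x|) ^ k / (Nat.factorial k : ℝ) := by
        funext k
        rw [← Real.exp_nat_mul]
      rw [this]
      exact Real.summable_pow_div_factorial _
  have hfs : Summable f := habs.of_abs
  -- total sum via summing over k first
  have htotal : HasSum f (Real.exp (Real.exp x)) := by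
    have hcol : HasSum (fun k : ℕ => Real.exp ((k : ℝ) * x) / (Nat.factorial k : ℝ))
        (Real.exp (Real.exp x)) := by
      have := hasSum_exp_real (Real.exp x)
      convert this using 2 with k
      rw [← Real.exp_nat_mul]
    have h1 : HasSum (fun k : ℕ => Real.exp ((k : ℝ) * x) / (Nat.factorial k : ℝ))
        (∑' p, f p) := hfs.hasSum.prod_fiberwise hrow
    have h2 := hfs.hasSum
    rwa [h1.unique hcol] at h2
  -- now sum over n first
  have hswap : HasSum (fun p : ℕ × ℕ => f p.swap) (Real.exp (Real.exp x)) :=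
    (Equiv.prodComm ℕ ℕ).hasSum_iff.mpr htotal
  have hcolsum : ∀ n : ℕ, HasSum (fun k => f (k, n))
      (Real.exp 1 * bellDobinski n / (Nat.factorial n : ℝ) * x ^ n) := by
    intro n
    have hs := (summable_pow_div_factorial' n).hasSum
    have h2 := hs.mul_right (x ^ n / (Nat.factorial n : ℝ))
    have heq1 : ∀ k : ℕ, (k : ℝ) ^ n / (Nat.factorial k : ℝ)
        * (x ^ n / (Nat.factorial n : ℝ)) = f (k, n) := by
      intro k; simp only [hf, mul_pow]; ring
    have hval : Real.exp 1 * bellDobinski n / (Nat.factorial n : ℝ) * x ^ n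
        = (∑' b : ℕ, (b : ℝ) ^ n / (Nat.factorial b : ℝ))
          * (x ^ n / (Nat.factorial n : ℝ)) := by
      rw [bellDobinski]
      have h := Real.exp_ne_zero 1
      have hn : (Nat.factorial n : ℝ) ≠ 0 := by positivity
      field_simp
    rw [hval]
    convert h2 using 1
    · rfl
    exact funext fun k => (heq1 k).symm
  have hmain : HasSum (fun n : ℕ =>
      Real.exp 1 * bellDobinski n / (Nat.factorial n : ℝ) * x ^ n)
      (Real.exp (Real.exp x)) :=
    hswap.prod_fiberwise fun n => hcolsum n
  have := hmain.div_const (Real.exp 1)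
  have heq : Real.exp (Real.exp x) / Real.exp 1 = Real.exp (Real.exp x - 1) := by
    rw [Real.exp_sub]
  rw [heq] at this
  convert this using 2 with n
  · rfl
  field_simp
end

section
/- (Theorem 1(4): autocovariance recursion.) Let (Ω, F, P) be a probability space with a filtration (F_t)_{t ∈ ℤ}, let (X_t)_{t ∈ ℤ} be square-integrable random variables adapted to (F_t), and set Z_t := E[X_t | F_{t-1}], assumed square-integrable. Suppose there are constants α₀ > 0, α_i ≥ 0 (1 ≤ i ≤ p), β_j ≥ 0 (1 ≤ j ≤ q) with Z_t = α₀ + ∑_{i=1}^p α_i X_{t-i} + ∑_{j=1}^q β_j Z_{t-j} almost surely for every t, and suppose the process is second-order stationary in the sense that there exist functions γ_X, γ_Z : ℕ → ℝ with Cov(X_t, X_{t-k}) = γ_X(k) and Cov(Z_t, Z_{t-k}) = γ_Z(k) for all t ∈ ℤ and k ≥ 0. Then for every t and every integer k ≥ 1, Cov(Z_t, X_{t-k}) = ∑_{i=1}^p α_i γ_X(|k − i|) + ∑_{j=1}^{min(k-1, q)} β_j γ_X(k − j) + ∑_{j=min(k-1,q)+1}^{q} β_j γ_Z(j − k). -/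
open MeasureTheory Finset ENNReal

noncomputable def cov {Ω : Type*} [MeasurableSpace Ω] (P : Measure Ω) (f g : Ω → ℝ) : ℝ :=
  (∫ ω, f ω * g ω ∂P) - (∫ ω, f ω ∂P) * (∫ ω, g ω ∂P)

section Aux
variable {Ω : Type*} {mΩ : MeasurableSpace Ω} {P : Measure Ω} [IsProbabilityMeasure P]

lemma memL2_integrable_mul {f g : Ω → ℝ} (hf : MemLp f 2 P) (hg : MemLp g 2 P) :
    Integrable (f * g) P := by
  have h : (1 : ℝ≥0∞) / 1 = 1 / 2 + 1 / 2 := by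
    norm_num [ENNReal.inv_two_add_inv_two]
  haveI : HolderTriple 2 2 1 := ⟨by simpa using ENNReal.inv_two_add_inv_two⟩
  have h2 := hg.smul (φ := f) (r := 1) hf
  rw [memLp_one_iff_integrable] at h2
  exact h2

omit [IsProbabilityMeasure P] in
lemma cov_comm (f g : Ω → ℝ) : cov P f g = cov P g f := by
  simp [cov, mul_comm]

omit [IsProbabilityMeasure P] in
lemma cov_congr_left {f f' g : Ω → ℝ} (h : f =ᵐ[P] f') : cov P f g = cov P f' g := by
  unfold cov
  rw [integral_congr_ae h, integral_congr_ae (h.mono fun ω hω => by rw [hω])]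

/-- key conditional expectation identity -/
lemma integral_condexp_mul {m : MeasurableSpace Ω} (hm : m ≤ mΩ) {f g : Ω → ℝ}
    (hf : StronglyMeasurable[m] f) (hfg : Integrable (f * g) P) (hg : Integrable g P) :
    ∫ ω, f ω * (P[g|m]) ω ∂P = ∫ ω, f ω * g ω ∂P := by
  have h := condExp_mul_of_stronglyMeasurable_left hf hfg hg
  calc ∫ ω, f ω * (P[g|m]) ω ∂P = ∫ ω, (P[f * g|m]) ω ∂P := (integral_congr_ae h).symm
    _ = ∫ ω, (f ω * g ω) ∂P := integral_condExp hm

end Aux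

/-- (Theorem 1(4): autocovariance recursion for a second-order stationary INGARCH(p,q)
process.) If `Z_t := E[X_t | F_{t-1}]` satisfies the linear recursion
`Z_t = α₀ + ∑_{i=1}^p α_i X_{t-i} + ∑_{j=1}^q β_j Z_{t-j}` a.s. and the process is
second-order stationary with autocovariance functions `γ_X` and `γ_Z`, then for `k ≥ 1`,
`Cov(Z_t, X_{t-k}) = ∑_{i=1}^p α_i γ_X(|k-i|) + ∑_{j=1}^{min(k-1,q)} β_j γ_X(k-j)
  + ∑_{j=min(k-1,q)+1}^{q} β_j γ_Z(j-k)`. -/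
theorem ingarch_autocovariance_recursion
    {Ω : Type*} {mΩ : MeasurableSpace Ω} {P : Measure Ω} [IsProbabilityMeasure P]
    (F : Filtration ℤ mΩ) (X : ℤ → Ω → ℝ)
    (hadapted : StronglyAdapted F X)
    (hX : ∀ t, MemLp (X t) 2 P)
    (Z : ℤ → Ω → ℝ) (hZdef : ∀ t, Z t = P[X t | F (t - 1)])
    (hZ : ∀ t, MemLp (Z t) 2 P)
    (p q : ℕ) (α₀ : ℝ) (α β : ℕ → ℝ)
    (hα₀ : 0 < α₀)
    (hα : ∀ i ∈ Icc 1 p, 0 ≤ α i)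
    (hβ : ∀ j ∈ Icc 1 q, 0 ≤ β j)
    (hrec : ∀ t : ℤ, ∀ᵐ ω ∂P,
      Z t ω = α₀ + ∑ i ∈ Icc 1 p, α i * X (t - (i : ℤ)) ω
        + ∑ j ∈ Icc 1 q, β j * Z (t - (j : ℤ)) ω)
    (γX γZ : ℕ → ℝ)
    (hγX : ∀ t : ℤ, ∀ k : ℕ, cov P (X t) (X (t - (k : ℤ))) = γX k)
    (hγZ : ∀ t : ℤ, ∀ k : ℕ, cov P (Z t) (Z (t - (k : ℤ))) = γZ k) :
    ∀ t : ℤ, ∀ k : ℕ, 1 ≤ k →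
      cov P (Z t) (X (t - (k : ℤ)))
        = ∑ i ∈ Icc 1 p, α i * γX ((k : ℤ) - (i : ℤ)).natAbs
          + ∑ j ∈ Icc 1 (min (k - 1) q), β j * γX (k - j)
          + ∑ j ∈ Icc (min (k - 1) q + 1) q, β j * γZ (j - k) := by
  have hXi : ∀ t, Integrable (X t) P := fun t => (hX t).integrable one_le_two
  have hZi : ∀ t, Integrable (Z t) P := fun t => (hZ t).integrable one_le_two
  have hXX : ∀ s u, Integrable (X s * X u) P := fun s u => memL2_integrable_mul (hX s) (hX u)
  have hZX : ∀ s u, Integrable (Z s * X u) P := fun s u => memL2_integrable_mul (hZ s) (hX u)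
  have hXZ : ∀ s u, Integrable (fun ω => X s ω * Z u ω) P := fun s u =>
    memL2_integrable_mul (hX s) (hZ u)
  have hZm : ∀ s : ℤ, StronglyMeasurable[F (s - 1)] (Z s) := fun s => by
    rw [hZdef s]; exact stronglyMeasurable_condExp
  have hEZ : ∀ s : ℤ, ∫ ω, Z s ω ∂P = ∫ ω, X s ω ∂P := fun s => by
    rw [hZdef s]; exact integral_condExp (F.le _)
  -- Lemma A : cov (Z s) (X (s - m)) = γX m for m ≥ 1
  have lemA : ∀ s : ℤ, ∀ m : ℕ, 1 ≤ m → cov P (Z s) (X (s - (m : ℤ))) = γX m := by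
    intro s m hm
    have hmeas : StronglyMeasurable[F (s - 1)] (X (s - (m : ℤ))) :=
      (hadapted _).mono (F.mono (by omega : s - (m : ℤ) ≤ s - 1))
    have key : ∫ ω, X (s - (m : ℤ)) ω * Z s ω ∂P = ∫ ω, X (s - (m : ℤ)) ω * X s ω ∂P := by
      have h := integral_condexp_mul (F.le (s - 1)) hmeas (hXX _ s) (hXi s)
      rw [← hZdef s] at h
      exact h
    have heq : cov P (Z s) (X (s - (m : ℤ))) = cov P (X s) (X (s - (m : ℤ))) := by
      unfold cov
      rw [hEZ s]
      congr 1
      calc ∫ ω, Z s ω * X (s - (m : ℤ)) ω ∂P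
          = ∫ ω, X (s - (m : ℤ)) ω * Z s ω ∂P := by simp_rw [mul_comm]
        _ = ∫ ω, X (s - (m : ℤ)) ω * X s ω ∂P := key
        _ = ∫ ω, X s ω * X (s - (m : ℤ)) ω ∂P := by simp_rw [mul_comm]
    rw [heq, hγX]
  -- Lemma B : cov (X s) (Z (s - m)) = γZ m
  have lemB : ∀ s : ℤ, ∀ m : ℕ, cov P (X s) (Z (s - (m : ℤ))) = γZ m := by
    intro s m
    have hmeas : StronglyMeasurable[F (s - 1)] (Z (s - (m : ℤ))) :=
      (hZm _).mono (F.mono (by omega : s - (m : ℤ) - 1 ≤ s - 1))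
    have key : ∫ ω, Z (s - (m : ℤ)) ω * Z s ω ∂P = ∫ ω, Z (s - (m : ℤ)) ω * X s ω ∂P := by
      have h := integral_condexp_mul (F.le (s - 1)) hmeas (hZX _ s) (hXi s)
      rw [← hZdef s] at h
      exact h
    have heq : cov P (X s) (Z (s - (m : ℤ))) = cov P (Z s) (Z (s - (m : ℤ))) := by
      unfold cov
      rw [hEZ s]
      congr 1
      calc ∫ ω, X s ω * Z (s - (m : ℤ)) ω ∂P
          = ∫ ω, Z (s - (m : ℤ)) ω * X s ω ∂P := by simp_rw [mul_comm]
        _ = ∫ ω, Z (s - (m : ℤ)) ω * Z s ω ∂P := key.symm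
        _ = ∫ ω, Z s ω * Z (s - (m : ℤ)) ω ∂P := by simp_rw [mul_comm]
    rw [heq, hγZ]
  intro t k hk
  set g := X (t - (k : ℤ)) with hg
  have hgX : MemLp g 2 P := hX _
  have hgi : Integrable g P := hXi _
  have hexp : cov P (Z t) g
      = ∑ i ∈ Icc 1 p, α i * cov P (X (t - (i : ℤ))) g
        + ∑ j ∈ Icc 1 q, β j * cov P (Z (t - (j : ℤ))) g := by
    have hcong : cov P (Z t) g = cov P (fun ω => α₀ + ∑ i ∈ Icc 1 p, α i * X (t - (i : ℤ)) ω
        + ∑ j ∈ Icc 1 q, β j * Z (t - (j : ℤ)) ω) g := cov_congr_left (hrec t)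
    rw [hcong]
    unfold cov
    have h1 : ∫ ω, (α₀ + ∑ i ∈ Icc 1 p, α i * X (t - (i : ℤ)) ω
        + ∑ j ∈ Icc 1 q, β j * Z (t - (j : ℤ)) ω) * g ω ∂P
        = α₀ * ∫ ω, g ω ∂P
          + ∑ i ∈ Icc 1 p, α i * ∫ ω, X (t - (i : ℤ)) ω * g ω ∂P
          + ∑ j ∈ Icc 1 q, β j * ∫ ω, Z (t - (j : ℤ)) ω * g ω ∂P := by
      simp_rw [add_mul, Finset.sum_mul, mul_assoc]
      rw [integral_add, integral_add, integral_const_mul, integral_finset_sum,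
        integral_finset_sum]
      · simp_rw [integral_const_mul]
      · exact fun j _ => ((hZX _ _).const_mul _)
      · exact fun i _ => ((hXX _ _).const_mul _)
      · exact (hgi).const_mul _
      · exact integrable_finset_sum _ (fun i _ => ((hXX _ _).const_mul _))
      · exact ((hgi).const_mul _).add
          (integrable_finset_sum _ (fun i _ => ((hXX _ _).const_mul _)))
      · exact integrable_finset_sum _ (fun j _ => ((hZX _ _).const_mul _))
    have h2 : ∫ ω, (α₀ + ∑ i ∈ Icc 1 p, α i * X (t - (i : ℤ)) ω
        + ∑ j ∈ Icc 1 q, β j * Z (t - (j : ℤ)) ω) ∂P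
        = α₀ + ∑ i ∈ Icc 1 p, α i * ∫ ω, X (t - (i : ℤ)) ω ∂P
          + ∑ j ∈ Icc 1 q, β j * ∫ ω, Z (t - (j : ℤ)) ω ∂P := by
      rw [integral_add, integral_add, integral_const, integral_finset_sum, integral_finset_sum]
      · simp_rw [integral_const_mul]; simp
      · exact fun j _ => (hZi _).const_mul _
      · exact fun i _ => (hXi _).const_mul _
      · exact integrable_const _
      · exact integrable_finset_sum _ (fun i _ => (hXi _).const_mul _)
      · exact (integrable_const _).add (integrable_finset_sum _ (fun i _ => (hXi _).const_mul _))
      · exact integrable_finset_sum _ (fun j _ => (hZi _).const_mul _)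
    rw [h1, h2]
    simp only [mul_sub, Finset.sum_sub_distrib]
    rw [add_mul, add_mul, Finset.sum_mul, Finset.sum_mul]
    simp only [mul_assoc]
    ring
  rw [hexp]
  -- evaluate the α-sum
  have hAsum : ∀ i ∈ Icc 1 p, α i * cov P (X (t - (i : ℤ))) g
      = α i * γX ((k : ℤ) - (i : ℤ)).natAbs := by
    intro i hi
    rcases le_or_gt i k with h | h
    · have hidx : t - (k : ℤ) = (t - (i : ℤ)) - ((k - i : ℕ) : ℤ) := by push_cast; omega
      have hna : ((k : ℤ) - (i : ℤ)).natAbs = k - i := by omega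
      rw [hg, hidx, hγX (t - (i : ℤ)) (k - i), hna]
    · have hidx : t - (i : ℤ) = (t - (k : ℤ)) - ((i - k : ℕ) : ℤ) := by push_cast; omega
      have hna : ((k : ℤ) - (i : ℤ)).natAbs = i - k := by omega
      rw [cov_comm, hg, hidx, hγX (t - (k : ℤ)) (i - k), hna]
  have hB1 : ∀ j ∈ Icc 1 (min (k - 1) q), β j * cov P (Z (t - (j : ℤ))) g
      = β j * γX (k - j) := by
    intro j hj
    simp only [Finset.mem_Icc] at hj
    have hidx : t - (k : ℤ) = (t - (j : ℤ)) - ((k - j : ℕ) : ℤ) := by push_cast; omega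
    rw [hg, hidx, lemA (t - (j : ℤ)) (k - j) (by omega)]
  have hB2 : ∀ j ∈ Icc (min (k - 1) q + 1) q, β j * cov P (Z (t - (j : ℤ))) g
      = β j * γZ (j - k) := by
    intro j hj
    simp only [Finset.mem_Icc] at hj
    have hidx : t - (j : ℤ) = (t - (k : ℤ)) - ((j - k : ℕ) : ℤ) := by push_cast; omega
    rw [cov_comm, hg, hidx, lemB (t - (k : ℤ)) (j - k)]
  have hm1 : min (k - 1) q ≤ q := min_le_right _ _
  have hsplit : ∑ j ∈ Icc 1 q, β j * cov P (Z (t - (j : ℤ))) g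
      = ∑ j ∈ Icc 1 (min (k - 1) q), β j * cov P (Z (t - (j : ℤ))) g
        + ∑ j ∈ Icc (min (k - 1) q + 1) q, β j * cov P (Z (t - (j : ℤ))) g := by
    rw [show (1 : ℕ) = 0 + 1 by rfl, Finset.Icc_add_one_left_eq_Ioc, Finset.Icc_add_one_left_eq_Ioc, zero_add, Finset.Icc_add_one_left_eq_Ioc,
      Finset.sum_Ioc_consecutive _ (Nat.zero_le _) hm1]
  rw [Finset.sum_congr rfl hAsum, hsplit, Finset.sum_congr rfl hB1,
    Finset.sum_congr rfl hB2, add_assoc]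
end
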